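/- Let a_1,...,a_n be positive canonical-form dyadic rational games and b_1,...,b_m negative ones with Σ l(a_i) − Σ r(b_i) < 0, and let X be any left end belonging to the dead-ending universe E. Then the misère outcome of a_1 + ... + a_n + b_1 + ... + b_m + X is L^-. -/

import Mathlib

universe u

namespace SetTheory

/-- Pre-games (ported from the older Mathlib, where `SetTheory.PGame` was defined). -/
inductive PGame : Type (u + 1)
  | mk : ∀ α β : Type u, (α → PGame) → (β → PGame) → PGame

namespace PGame

def LeftMoves : PGame → Type u
  | mk l _ _ _ => l

def RightMoves : PGame → Type u
  | mk _ r _ _ => r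

def moveLeft : ∀ g : PGame, LeftMoves g → PGame
  | mk _l _ L _ => L

def moveRight : ∀ g : PGame, RightMoves g → PGame
  | mk _ _r _ R => R

inductive IsOption : PGame → PGame → Prop
  | moveLeft {x : PGame} (i : x.LeftMoves) : IsOption (x.moveLeft i) x
  | moveRight {x : PGame} (i : x.RightMoves) : IsOption (x.moveRight i) x

instance : Zero PGame :=
  ⟨⟨PEmpty, PEmpty, PEmpty.elim, PEmpty.elim⟩⟩

def neg : PGame → PGame
  | ⟨l, r, L, R⟩ => ⟨r, l, fun i => neg (R i), fun i => neg (L i)⟩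

instance : Neg PGame :=
  ⟨neg⟩

noncomputable instance : Add PGame.{u} :=
  ⟨fun x y => by
    induction x generalizing y with | mk xl xr _ _ IHxl IHxr => _
    induction y with | mk yl yr yL yR IHyl IHyr => _
    have y := mk yl yr yL yR
    refine ⟨xl ⊕ yl, xr ⊕ yr, Sum.rec ?_ ?_, Sum.rec ?_ ?_⟩
    · exact fun i => IHxl i y
    · exact fun i => IHyl i
    · exact fun i => IHxr i y
    · exact fun i => IHyr i⟩

end PGame

end SetTheory

open SetTheory

namespace Misere

/-- `F` is a follower of `G`: reachable from `G` by a (possibly empty) sequence of moves. -/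
def Follower (F G : PGame) : Prop := Relation.ReflTransGen PGame.IsOption F G

def IsLeftEnd (G : PGame) : Prop := IsEmpty G.LeftMoves
def IsRightEnd (G : PGame) : Prop := IsEmpty G.RightMoves

/-- A dead left end: every follower (including itself) is a left end. -/
def DeadLeftEnd (G : PGame) : Prop := ∀ F, Follower F G → IsLeftEnd F
def DeadRightEnd (G : PGame) : Prop := ∀ F, Follower F G → IsRightEnd F
def DeadEnd (G : PGame) : Prop := DeadLeftEnd G ∨ DeadRightEnd G

/-- A game is dead-ending if every end follower is a dead end. -/
def DeadEnding (G : PGame) : Prop :=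
  ∀ F, Follower F G → (IsLeftEnd F → DeadLeftEnd F) ∧ (IsRightEnd F → DeadRightEnd F)

/-- The universe of dead-ending games. -/
def E : Set PGame := {G | DeadEnding G}

/-- `(misereWins G).1` : Left, moving first, wins `G` under misère play;
    `(misereWins G).2` : Right, moving first, wins `G` under misère play. -/
def misereWins : PGame → Prop × Prop
  | PGame.mk l r L R =>
      (IsEmpty l ∨ ∃ i, ¬ (misereWins (L i)).2,
       IsEmpty r ∨ ∃ j, ¬ (misereWins (R j)).1)

def LeftWinsGF (G : PGame) : Prop := (misereWins G).1
def RightWinsGF (G : PGame) : Prop := (misereWins G).2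

inductive MOutcome : Type
  | L | N | P | R
deriving DecidableEq

/-- Partial order on misère outcomes: `R` minimal, `L` maximal, `N` and `P` incomparable. -/
def MOutcome.le : MOutcome → MOutcome → Prop
  | .R, _ => True
  | _, .L => True
  | a, b => a = b

instance : LE MOutcome := ⟨MOutcome.le⟩

/-- The misère outcome of a game. -/
noncomputable def outcome (G : PGame) : MOutcome := by
  classical
  exact if LeftWinsGF G then (if RightWinsGF G then .N else .L)
        else (if RightWinsGF G then .R else .P)

/-- `G ≡ H (mod U)`. -/
def equivMod (U : Set PGame) (G H : PGame) : Prop :=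
  ∀ X ∈ U, outcome (G + X) = outcome (H + X)

/-- `G ≧ H (mod U)`. -/
def geMod (U : Set PGame) (G H : PGame) : Prop :=
  ∀ X ∈ U, outcome (H + X) ≤ outcome (G + X)

/-- `LeftChain G n`: there is a sequence of `n` consecutive Left moves from `G`
ending at the zero position. -/
inductive LeftChain : PGame → ℕ → Prop
  | zero (G : PGame) : IsLeftEnd G → IsRightEnd G → LeftChain G 0
  | succ (G : PGame) (i : G.LeftMoves) (n : ℕ) :
      LeftChain (G.moveLeft i) n → LeftChain G (n + 1)

inductive RightChain : PGame → ℕ → Prop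
  | zero (G : PGame) : IsLeftEnd G → IsRightEnd G → RightChain G 0
  | succ (G : PGame) (j : G.RightMoves) (n : ℕ) :
      RightChain (G.moveRight j) n → RightChain G (n + 1)

/-- Left-length: minimum number of consecutive Left moves needed to reach zero. -/
noncomputable def leftLength (G : PGame) : ℕ := sInf {n | LeftChain G n}

/-- Right-length: minimum number of consecutive Right moves needed to reach zero. -/
noncomputable def rightLength (G : PGame) : ℕ := sInf {n | RightChain G n}

/-- Normal-play canonical form of a nonnegative integer. -/
def natGame : ℕ → PGame
  | 0 => 0
  | n + 1 => PGame.mk PUnit PEmpty (fun _ => natGame n) PEmpty.elim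

/-- Normal-play canonical form of an integer (negatives are conjugates). -/
def intGame (n : ℤ) : PGame :=
  if 0 ≤ n then natGame n.toNat else -natGame (-n).toNat

/-- Normal-play canonical form of the dyadic rational `m / 2 ^ j`. -/
def dyadicGame : ℤ → ℕ → PGame
  | m, 0 => intGame m
  | m, j + 1 =>
      if m % 2 = 0 then dyadicGame (m / 2) j
      else PGame.mk PUnit PUnit (fun _ => dyadicGame ((m - 1) / 2) j)
            (fun _ => dyadicGame ((m + 1) / 2) j)

/-- The closure of dead ends: finite disjunctive sums of dead ends. -/
def DeadEndClosure : Set PGame :=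
  {G | ∃ l : List PGame, (∀ x ∈ l, DeadEnd x) ∧ G = l.sum}

end Misere

open Misere SetTheory PGame


namespace SetTheory.PGame

noncomputable def moveRecOn {C : PGame → Sort*} (x : PGame)
    (IH : ∀ y : PGame, (∀ i, C (y.moveLeft i)) → (∀ j, C (y.moveRight j)) → C y) : C x :=
  x.rec fun yl yr yL yR => IH (mk yl yr yL yR)

theorem leftMoves_add : ∀ x y : PGame, (x + y).LeftMoves = (x.LeftMoves ⊕ y.LeftMoves)
  | ⟨_, _, _, _⟩, ⟨_, _, _, _⟩ => rfl

theorem rightMoves_add : ∀ x y : PGame, (x + y).RightMoves = (x.RightMoves ⊕ y.RightMoves)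
  | ⟨_, _, _, _⟩, ⟨_, _, _, _⟩ => rfl

def toLeftMovesAdd {x y : PGame} : x.LeftMoves ⊕ y.LeftMoves ≃ (x + y).LeftMoves :=
  Equiv.cast (leftMoves_add x y).symm

def toRightMovesAdd {x y : PGame} : x.RightMoves ⊕ y.RightMoves ≃ (x + y).RightMoves :=
  Equiv.cast (rightMoves_add x y).symm

theorem add_moveLeft_inl : ∀ {x : PGame} (y : PGame) (i),
    (x + y).moveLeft (toLeftMovesAdd (Sum.inl i)) = x.moveLeft i + y
  | ⟨_, _, _, _⟩, ⟨_, _, _, _⟩, _ => rfl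

theorem add_moveLeft_inr : ∀ (x : PGame) {y : PGame} (i),
    (x + y).moveLeft (toLeftMovesAdd (Sum.inr i)) = x + y.moveLeft i
  | ⟨_, _, _, _⟩, ⟨_, _, _, _⟩, _ => rfl

theorem add_moveRight_inl : ∀ {x : PGame} (y : PGame) (i),
    (x + y).moveRight (toRightMovesAdd (Sum.inl i)) = x.moveRight i + y
  | ⟨_, _, _, _⟩, ⟨_, _, _, _⟩, _ => rfl

theorem add_moveRight_inr : ∀ (x : PGame) {y : PGame} (i),
    (x + y).moveRight (toRightMovesAdd (Sum.inr i)) = x + y.moveRight i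
  | ⟨_, _, _, _⟩, ⟨_, _, _, _⟩, _ => rfl

theorem rightMoves_add_cases {x y : PGame} (k) {P : (x + y).RightMoves → Prop}
    (hl : ∀ j, P (toRightMovesAdd (Sum.inl j))) (hr : ∀ j, P (toRightMovesAdd (Sum.inr j))) :
    P k := by
  rw [← toRightMovesAdd.apply_symm_apply k]
  rcases toRightMovesAdd.symm k with i | i
  exacts [hl i, hr i]

theorem isEmpty_zero_leftMoves : IsEmpty (LeftMoves 0) := inferInstanceAs (IsEmpty PEmpty)

theorem isEmpty_zero_rightMoves : IsEmpty (RightMoves 0) := inferInstanceAs (IsEmpty PEmpty)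

theorem isEmpty_leftMoves_add (x y : PGame) [IsEmpty x.LeftMoves] [IsEmpty y.LeftMoves] :
    IsEmpty (x + y).LeftMoves := by
  rw [leftMoves_add]
  infer_instance

theorem neg_def {xl xr : Type _} {xL : xl → PGame} {xR : xr → PGame} :
    -mk xl xr xL xR = mk xr xl (fun j => -xR j) fun i => -xL i := rfl

theorem neg_zero : -(0 : PGame) = 0 := by
  show neg ⟨PEmpty, PEmpty, PEmpty.elim, PEmpty.elim⟩ = ⟨PEmpty, PEmpty, PEmpty.elim, PEmpty.elim⟩
  rw [neg]
  congr 1 <;> funext i <;> exact i.elim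

end SetTheory.PGame


namespace Stmt14
open Misere

/-- arithmetic left-length of `dyadicGame m j` -/
def ll : ℤ → ℕ → ℕ
  | m, 0 => m.toNat
  | m, j+1 => if m % 2 = 0 then ll (m/2) j else if 0 < m then ll ((m-1)/2) j + 1 else 0

def rr (m : ℤ) (j : ℕ) : ℕ := ll (-m) j

lemma ll_zero (m : ℤ) : ll m 0 = m.toNat := rfl

lemma ll_even (m : ℤ) (j : ℕ) (h : m % 2 = 0) : ll m (j+1) = ll (m/2) j := by
  simp [ll, h]

lemma ll_odd_pos (m : ℤ) (j : ℕ) (h : ¬ m % 2 = 0) (h2 : 0 < m) :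
    ll m (j+1) = ll ((m-1)/2) j + 1 := by simp [ll, h, h2]

lemma ll_odd_neg (m : ℤ) (j : ℕ) (h : ¬ m % 2 = 0) (h2 : ¬ 0 < m) :
    ll m (j+1) = 0 := by simp [ll, h, h2]

lemma d0 (m : ℤ) : dyadicGame m 0 = intGame m := rfl

lemma dyadic_even (m : ℤ) (j : ℕ) (h : m % 2 = 0) :
    dyadicGame m (j+1) = dyadicGame (m/2) j := by
  rw [dyadicGame, if_pos h]

lemma dyadic_odd (m : ℤ) (j : ℕ) (h : ¬ m % 2 = 0) :
    dyadicGame m (j+1) = PGame.mk PUnit PUnit (fun _ => dyadicGame ((m-1)/2) j)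
      (fun _ => dyadicGame ((m+1)/2) j) := by
  rw [dyadicGame, if_neg h]

lemma intGame_zero : intGame 0 = 0 := by
  rw [intGame, if_pos le_rfl]; rfl

lemma natGame_succ (k : ℕ) : natGame (k+1) =
    PGame.mk PUnit PEmpty (fun _ => natGame k) PEmpty.elim := rfl

lemma leftWinsGF_iff (G : PGame) :
    LeftWinsGF G ↔ IsEmpty G.LeftMoves ∨ ∃ i, ¬ RightWinsGF (G.moveLeft i) := by
  cases G with
  | mk l r L R =>
      rw [LeftWinsGF, misereWins]
      exact Iff.rfl

lemma rightWinsGF_iff (G : PGame) :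
    RightWinsGF G ↔ IsEmpty G.RightMoves ∨ ∃ j, ¬ LeftWinsGF (G.moveRight j) := by
  cases G with
  | mk l r L R =>
      rw [RightWinsGF, misereWins]
      exact Iff.rfl

lemma outcome_eq_L {G : PGame} (h1 : LeftWinsGF G) (h2 : ¬ RightWinsGF G) :
    outcome G = MOutcome.L := by
  unfold outcome
  rw [if_pos h1, if_neg h2]

lemma rr_zero (m : ℤ) : rr m 0 = (-m).toNat := rfl

lemma rr_even (m : ℤ) (j : ℕ) (h : m % 2 = 0) : rr m (j+1) = rr (m/2) j := by
  unfold rr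
  rw [ll_even (-m) j (by omega), show (-m)/2 = -(m/2) by omega]

lemma rr_odd_neg (m : ℤ) (j : ℕ) (h : ¬ m % 2 = 0) (h2 : m < 0) :
    rr m (j+1) = rr ((m+1)/2) j + 1 := by
  unfold rr
  rw [ll_odd_pos (-m) j (by omega) (by omega), show (-m-1)/2 = -((m+1)/2) by omega]

lemma rr_odd_pos (m : ℤ) (j : ℕ) (h : ¬ m % 2 = 0) (h2 : 0 < m) :
    rr m (j+1) = 0 := by
  unfold rr
  rw [ll_odd_neg (-m) j (by omega) (by omega)]

lemma ll_of_nonpos : ∀ (j : ℕ) (m : ℤ), m ≤ 0 → ll m j = 0 := by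
  intro j
  induction j with
  | zero => intro m hm; rw [ll_zero]; omega
  | succ j ih =>
    intro m hm
    by_cases h : m % 2 = 0
    · rw [ll_even m j h]; exact ih _ (by omega)
    · rw [ll_odd_neg m j h (by omega)]

lemma ll_pos : ∀ (j : ℕ) (m : ℤ), 0 < m → 0 < ll m j := by
  intro j
  induction j with
  | zero => intro m hm; rw [ll_zero]; omega
  | succ j ih =>
    intro m hm
    by_cases h : m % 2 = 0
    · rw [ll_even m j h]; exact ih _ (by omega)
    · rw [ll_odd_pos m j h hm]; omega

lemma rr_of_nonneg (j : ℕ) (m : ℤ) (hm : 0 ≤ m) : rr m j = 0 :=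
  ll_of_nonpos j (-m) (by omega)

lemma rr_pos (j : ℕ) (m : ℤ) (hm : m < 0) : 0 < rr m j :=
  ll_pos j (-m) (by omega)

lemma ll_succ_le : ∀ (j : ℕ) (m : ℤ), ll (m+1) j ≤ ll m j + 1 := by
  intro j
  induction j with
  | zero => intro m; rw [ll_zero, ll_zero]; omega
  | succ j ih =>
    intro m
    by_cases h : m % 2 = 0
    · rw [ll_even m j h]
      by_cases h2 : 0 < m + 1
      · rw [ll_odd_pos (m+1) j (by omega) h2, show (m+1-1)/2 = m/2 by omega]
      · rw [ll_odd_neg (m+1) j (by omega) h2]; omega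
    · rw [ll_even (m+1) j (by omega)]
      by_cases h2 : 0 < m
      · rw [ll_odd_pos m j h h2, show (m+1)/2 = (m-1)/2 + 1 by omega]
        have := ih ((m-1)/2)
        omega
      · rw [ll_of_nonpos j ((m+1)/2) (by omega)]; omega

/-- normalization of a dyadic index -/
def nz : ℤ → ℕ → ℤ × ℕ
  | m, 0 => (m, 0)
  | m, j+1 => if m % 2 = 0 then nz (m/2) j else (m, j+1)

lemma nz_spec : ∀ (j : ℕ) (m : ℤ),
    dyadicGame m j = dyadicGame (nz m j).1 (nz m j).2 ∧
    ll m j = ll (nz m j).1 (nz m j).2 ∧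
    rr m j = rr (nz m j).1 (nz m j).2 ∧
    (nz m j).2 + (nz m j).1.natAbs ≤ j + m.natAbs ∧
    ((nz m j).2 = 0 ∨ ¬ (nz m j).1 % 2 = 0) ∧
    ((0:ℤ) < (nz m j).1 ↔ 0 < m) ∧ ((nz m j).1 < 0 ↔ m < 0) := by
  intro j
  induction j with
  | zero =>
    intro m
    refine ⟨rfl, rfl, rfl, ?_, Or.inl rfl, Iff.rfl, Iff.rfl⟩
    simp [nz]
  | succ j ih =>
    intro m
    by_cases h : m % 2 = 0
    · have hnz : nz m (j+1) = nz (m/2) j := by simp [nz, h]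
      obtain ⟨e1, e2, e3, e4, e5, e6, e7⟩ := ih (m/2)
      rw [hnz]
      refine ⟨?_, ?_, ?_, by omega, e5, by omega, by omega⟩
      · rw [dyadic_even m j h]; exact e1
      · rw [ll_even m j h]; exact e2
      · rw [rr_even m j h]; exact e3
    · have hnz : nz m (j+1) = (m, j+1) := by simp [nz, h]
      rw [hnz]
      exact ⟨rfl, rfl, rfl, le_rfl, Or.inr h, Iff.rfl, Iff.rfl⟩

lemma intGame_pos (m : ℤ) (h : 0 < m) :
    intGame m = PGame.mk PUnit PEmpty (fun _ => dyadicGame (m-1) 0) PEmpty.elim := by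
  obtain ⟨k, hk⟩ : ∃ k, m.toNat = k + 1 := ⟨m.toNat - 1, by omega⟩
  have hd : dyadicGame (m-1) 0 = natGame k := by
    rw [d0, intGame, if_pos (by omega : (0:ℤ) ≤ m - 1)]
    congr 1
    omega
  rw [intGame, if_pos (by omega : (0:ℤ) ≤ m), hk, natGame_succ, hd]

lemma intGame_nonpos (m : ℤ) (h : m ≤ 0) : intGame m = -natGame (-m).toNat := by
  rcases eq_or_lt_of_le h with h0 | h0
  · rw [h0, intGame_zero, show ((-0:ℤ)).toNat = 0 by omega]
    show (0:PGame) = -natGame 0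
    rw [show natGame 0 = 0 from rfl, neg_zero]
  · rw [intGame, if_neg (by omega)]

lemma intGame_neg (m : ℤ) (h : m < 0) :
    intGame m = PGame.mk PEmpty PUnit PEmpty.elim (fun _ => dyadicGame (m+1) 0) := by
  obtain ⟨k, hk⟩ : ∃ k, (-m).toNat = k + 1 := ⟨(-m).toNat - 1, by omega⟩
  have hd : dyadicGame (m+1) 0 = -natGame k := by
    rw [d0, intGame_nonpos (m+1) (by omega), show (-(m+1)).toNat = k by omega]
  rw [intGame_nonpos m (le_of_lt h), hk, natGame_succ, neg_def]
  have e1 : (fun j => -(PEmpty.elim j : PGame)) = (PEmpty.elim : PEmpty → PGame) := by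
    funext j; cases j
  have e2 : (fun (_ : PUnit) => -natGame k) = (fun (_ : PUnit) => dyadicGame (m+1) 0) := by
    funext _; rw [hd]
  rw [e1, e2]

/-- sum-of-dyadic-components tree, indexed by total left length, right length, measure -/
inductive CTree : PGame → ℕ → ℕ → ℕ → Prop
  | comp (m : ℤ) (j : ℕ) : CTree (dyadicGame m j) (ll m j) (rr m j) (j + m.natAbs)
  | add {G H : PGame} {a b s c d t : ℕ} :
      CTree G a b s → CTree H c d t → CTree (G + H) (a+c) (b+d) (s+t)

lemma ctree_cast {G : PGame} {a b s a' b' s' : ℕ} (h : CTree G a b s)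
    (ha : a = a') (hb : b = b') (hs : s = s') : CTree G a' b' s' := by
  subst ha; subst hb; subst hs; exact h

lemma ctree_left_pos {G : PGame} {a b s : ℕ} (h : CTree G a b s) (ha : 0 < a) :
    ∃ (i : G.LeftMoves) (a' s' : ℕ), a' + 1 = a ∧ s' < s ∧ CTree (G.moveLeft i) a' b s' := by
  induction h with
  | comp m j =>
    obtain ⟨e1, e2, e3, e4, e5, e6, e7⟩ := nz_spec j m
    rcases hnz : nz m j with ⟨m', j'⟩
    rw [hnz] at e1 e2 e3 e4 e5 e6 e7
    simp only at e1 e2 e3 e4 e5 e6 e7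
    have hm : 0 < m := by
      by_contra hc
      rw [ll_of_nonpos j m (by omega)] at ha; omega
    have hm' : 0 < m' := by omega
    rw [e1]
    rcases j' with _ | jj
    · rw [d0, intGame_pos m' hm']
      refine ⟨PUnit.unit, ll (m'-1) 0, 0 + (m'-1).natAbs, ?_, ?_, ?_⟩
      · rw [e2, ll_zero, ll_zero]; omega
      · omega
      · refine ctree_cast (CTree.comp (m'-1) 0) rfl ?_ rfl
        rw [e3, rr_of_nonneg 0 m' (by omega), rr_of_nonneg 0 (m'-1) (by omega)]
    · have hodd : ¬ m' % 2 = 0 := e5.resolve_left (by omega)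
      rw [dyadic_odd m' jj hodd]
      refine ⟨PUnit.unit, ll ((m'-1)/2) jj, jj + ((m'-1)/2).natAbs, ?_, by omega, ?_⟩
      · rw [e2, ll_odd_pos m' jj hodd hm']
      · refine ctree_cast (CTree.comp ((m'-1)/2) jj) rfl ?_ rfl
        rw [e3, rr_of_nonneg (jj+1) m' (by omega), rr_of_nonneg jj ((m'-1)/2) (by omega)]
  | add h1 h2 ih1 ih2 =>
    rename_i G H a b s c d t
    rcases Nat.lt_or_ge 0 a with ha1 | ha1
    · obtain ⟨i, a', s', e1, e2, e3⟩ := ih1 ha1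
      refine ⟨toLeftMovesAdd (Sum.inl i), a' + c, s' + t, by omega, by omega, ?_⟩
      rw [add_moveLeft_inl]
      exact CTree.add e3 h2
    · obtain ⟨i, c', t', e1, e2, e3⟩ := ih2 (by omega)
      refine ⟨toLeftMovesAdd (Sum.inr i), a + c', s + t', by omega, by omega, ?_⟩
      rw [add_moveLeft_inr]
      exact CTree.add h1 e3

lemma ctree_left_zero {G : PGame} {a b s : ℕ} (h : CTree G a b s) (ha : a = 0) :
    IsEmpty G.LeftMoves ∨
      ∃ (i : G.LeftMoves) (b' s' : ℕ), 0 < b' ∧ s' < s ∧ CTree (G.moveLeft i) 0 b' s' := by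
  induction h with
  | comp m j =>
    obtain ⟨e1, e2, e3, e4, e5, e6, e7⟩ := nz_spec j m
    rcases hnz : nz m j with ⟨m', j'⟩
    rw [hnz] at e1 e2 e3 e4 e5 e6 e7
    simp only at e1 e2 e3 e4 e5 e6 e7
    have hm : ¬ 0 < m := by
      intro hc
      have := ll_pos j m hc; omega
    have hm' : m' ≤ 0 := by omega
    rw [e1]
    rcases j' with _ | jj
    · left
      rcases eq_or_lt_of_le hm' with h0 | h0
      · rw [d0, h0, intGame_zero]
        exact PGame.isEmpty_zero_leftMoves
      · rw [d0, intGame_neg m' h0]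
        exact inferInstanceAs (IsEmpty PEmpty)
    · have hodd : ¬ m' % 2 = 0 := e5.resolve_left (by omega)
      have hm'' : m' < 0 := by omega
      rw [dyadic_odd m' jj hodd]
      refine Or.inr ⟨PUnit.unit, rr ((m'-1)/2) jj, jj + ((m'-1)/2).natAbs,
        rr_pos jj ((m'-1)/2) (by omega), by omega, ?_⟩
      refine ctree_cast (CTree.comp ((m'-1)/2) jj) ?_ rfl rfl
      rw [ll_of_nonpos jj ((m'-1)/2) (by omega)]
  | add h1 h2 ih1 ih2 =>
    rename_i G H a b s c d t
    have ha1 : a = 0 := by omega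
    have ha2 : c = 0 := by omega
    rcases ih1 ha1 with hE1 | ⟨i, b', s', f1, f2, f3⟩
    · rcases ih2 ha2 with hE2 | ⟨i, d', t', f1, f2, f3⟩
      · left
        exact @PGame.isEmpty_leftMoves_add G H hE1 hE2
      · refine Or.inr ⟨toLeftMovesAdd (Sum.inr i), b + d', s + t', by omega, by omega, ?_⟩
        rw [add_moveLeft_inr]
        exact ctree_cast (CTree.add h1 f3) (by omega) rfl rfl
    · refine Or.inr ⟨toLeftMovesAdd (Sum.inl i), b' + d, s' + t, by omega, by omega, ?_⟩
      rw [add_moveLeft_inl]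
      exact ctree_cast (CTree.add f3 h2) (by omega) rfl rfl

lemma ctree_right_nonempty {G : PGame} {a b s : ℕ} (h : CTree G a b s) (hb : 0 < b) :
    Nonempty G.RightMoves := by
  induction h with
  | comp m j =>
    obtain ⟨e1, e2, e3, e4, e5, e6, e7⟩ := nz_spec j m
    rcases hnz : nz m j with ⟨m', j'⟩
    rw [hnz] at e1 e2 e3 e4 e5 e6 e7
    simp only at e1 e2 e3 e4 e5 e6 e7
    have hm : m < 0 := by
      by_contra hc
      rw [rr_of_nonneg j m (by omega)] at hb; omega
    have hm' : m' < 0 := by omega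
    rw [e1]
    rcases j' with _ | jj
    · rw [d0, intGame_neg m' hm']
      exact ⟨PUnit.unit⟩
    · have hodd : ¬ m' % 2 = 0 := e5.resolve_left (by omega)
      rw [dyadic_odd m' jj hodd]
      exact ⟨PUnit.unit⟩
  | add h1 h2 ih1 ih2 =>
    rename_i G H a b s c d t
    rcases Nat.lt_or_ge 0 b with hb1 | hb1
    · obtain ⟨i⟩ := ih1 hb1
      exact ⟨toRightMovesAdd (Sum.inl i)⟩
    · obtain ⟨i⟩ := ih2 (by omega)
      exact ⟨toRightMovesAdd (Sum.inr i)⟩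

lemma ctree_right_moves {G : PGame} {a b s : ℕ} (h : CTree G a b s) :
    ∀ (i : G.RightMoves),
      ∃ a' b' s', s' < s ∧ a' ≤ a ∧ b ≤ b' + 1 ∧ CTree (G.moveRight i) a' b' s' := by
  induction h with
  | comp m j =>
    obtain ⟨e1, e2, e3, e4, e5, e6, e7⟩ := nz_spec j m
    rcases hnz : nz m j with ⟨m', j'⟩
    rw [hnz] at e1 e2 e3 e4 e5 e6 e7
    simp only at e1 e2 e3 e4 e5 e6 e7
    rw [e1]
    rcases j' with _ | jj
    · rcases lt_trichotomy m' 0 with hm' | hm' | hm'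
      · rw [d0, intGame_neg m' hm']
        intro i
        refine ⟨ll (m'+1) 0, rr (m'+1) 0, 0 + (m'+1).natAbs, by omega, ?_, ?_, ?_⟩
        · rw [e2, ll_zero, ll_zero]; omega
        · rw [e3, rr_zero, rr_zero]; omega
        · exact CTree.comp (m'+1) 0
      · rw [d0, hm', intGame_zero]
        intro i
        exact i.elim
      · rw [d0, intGame_pos m' hm']
        intro i
        exact i.elim
    · have hodd : ¬ m' % 2 = 0 := e5.resolve_left (by omega)
      rw [dyadic_odd m' jj hodd]
      intro i
      refine ⟨ll ((m'+1)/2) jj, rr ((m'+1)/2) jj, jj + ((m'+1)/2).natAbs, by omega, ?_, ?_,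
        CTree.comp ((m'+1)/2) jj⟩
      · rcases Nat.lt_or_ge 0 (ll ((m'+1)/2) jj) with hl | hl
        · -- then (m'+1)/2 > 0, so m' > 0
          have hp : 0 < (m'+1)/2 := by
            by_contra hc
            rw [ll_of_nonpos jj ((m'+1)/2) (by omega)] at hl; omega
          have hmp : 0 < m' := by omega
          rw [e2, ll_odd_pos m' jj hodd hmp, show (m'+1)/2 = (m'-1)/2 + 1 by omega]
          exact ll_succ_le jj ((m'-1)/2)
        · omega
      · rcases Nat.lt_or_ge 0 (rr m' (jj+1)) with hr | hr
        · have hmn : m' < 0 := by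
            by_contra hc
            rw [rr_of_nonneg (jj+1) m' (by omega)] at hr; omega
          rw [e3, rr_odd_neg m' jj hodd hmn]
        · omega
  | add h1 h2 ih1 ih2 =>
    rename_i G H a b s c d t
    intro i
    refine PGame.rightMoves_add_cases (P := fun i => ∃ a' b' s', s' < s + t ∧ a' ≤ a + c ∧
      b + d ≤ b' + 1 ∧ CTree ((G + H).moveRight i) a' b' s') i ?_ ?_
    · intro k
      obtain ⟨a', b', s', f1, f2, f3, f4⟩ := ih1 k
      rw [add_moveRight_inl]
      exact ⟨a' + c, b' + d, s' + t, by omega, by omega, by omega, CTree.add f4 h2⟩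
    · intro k
      obtain ⟨c', d', t', f1, f2, f3, f4⟩ := ih2 k
      rw [add_moveRight_inr]
      exact ⟨a + c', b + d', s + t', by omega, by omega, by omega, CTree.add h1 f4⟩

lemma main : ∀ (Y : PGame), DeadLeftEnd Y → ∀ (n : ℕ) (G : PGame) (a b s : ℕ),
    CTree G a b s → s ≤ n →
    (a ≤ b → LeftWinsGF (G + Y)) ∧ (a < b → ¬ RightWinsGF (G + Y)) := by
  intro Y
  induction Y using PGame.moveRecOn with
  | _ Y ihl ihr =>
  intro hY n
  induction n using Nat.strong_induction_on with
  | _ n IHn =>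
  intro G a b s hG hs
  constructor
  · intro hab
    rw [leftWinsGF_iff]
    by_cases ha : 0 < a
    · obtain ⟨i, a', s', f1, f2, f3⟩ := ctree_left_pos hG ha
      refine Or.inr ⟨toLeftMovesAdd (Sum.inl i), ?_⟩
      rw [add_moveLeft_inl]
      exact (IHn s' (by omega) _ a' b s' f3 le_rfl).2 (by omega)
    · rcases ctree_left_zero hG (by omega) with hE | ⟨i, b', s', f1, f2, f3⟩
      · left
        have hYend : IsLeftEnd Y := hY Y Relation.ReflTransGen.refl
        exact @PGame.isEmpty_leftMoves_add G Y hE hYend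
      · refine Or.inr ⟨toLeftMovesAdd (Sum.inl i), ?_⟩
        rw [add_moveLeft_inl]
        exact (IHn s' (by omega) _ 0 b' s' f3 le_rfl).2 (by omega)
  · intro hab
    rw [rightWinsGF_iff]
    push_neg
    constructor
    · obtain ⟨i⟩ := ctree_right_nonempty hG (by omega)
      exact ⟨toRightMovesAdd (Sum.inl i)⟩
    · intro j
      refine PGame.rightMoves_add_cases (P := fun j => LeftWinsGF ((G + Y).moveRight j))
        j ?_ ?_
      · intro k
        rw [add_moveRight_inl]
        obtain ⟨a', b', s', f1, f2, f3, f4⟩ := ctree_right_moves hG k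
        exact (IHn s' (by omega) _ a' b' s' f4 le_rfl).1 (by omega)
      · intro k
        rw [add_moveRight_inr]
        have hY' : DeadLeftEnd (Y.moveRight k) := fun F hF =>
          hY F (hF.trans (Relation.ReflTransGen.single (PGame.IsOption.moveRight k)))
        exact (ihr k hY' s G a b s hG le_rfl).1 (le_of_lt hab)

lemma isLeftEnd_zero : IsLeftEnd (0 : PGame) := PGame.isEmpty_zero_leftMoves
lemma isRightEnd_zero : IsRightEnd (0 : PGame) := PGame.isEmpty_zero_rightMoves

lemma leftChain_natGame : ∀ k : ℕ, LeftChain (natGame k) k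
  | 0 => LeftChain.zero 0 isLeftEnd_zero isRightEnd_zero
  | k+1 => LeftChain.succ (natGame (k+1)) PUnit.unit k (leftChain_natGame k)

lemma leftChain_ll : ∀ (j : ℕ) (m : ℤ), 0 ≤ m → LeftChain (dyadicGame m j) (ll m j) := by
  intro j
  induction j with
  | zero =>
    intro m hm
    rw [d0, intGame, if_pos hm, ll_zero]
    exact leftChain_natGame m.toNat
  | succ j ih =>
    intro m hm
    by_cases h : m % 2 = 0
    · rw [dyadic_even m j h, ll_even m j h]
      exact ih (m/2) (by omega)
    · have hm2 : 0 < m := by omega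
      rw [dyadic_odd m j h, ll_odd_pos m j h hm2]
      exact LeftChain.succ (PGame.mk _ _ _ _) PUnit.unit _ (ih ((m-1)/2) (by omega))

lemma leftChain_unique : ∀ (n : ℕ) (m : ℤ) (j : ℕ), 0 ≤ m →
    LeftChain (dyadicGame m j) n → n = ll m j := by
  intro n
  induction n with
  | zero =>
    intro m j hm h
    obtain ⟨e1, e2, e3, e4, e5, e6, e7⟩ := nz_spec j m
    rcases hnz : nz m j with ⟨m', j'⟩
    rw [hnz] at e1 e2 e3 e4 e5 e6 e7
    simp only at e1 e2 e3 e4 e5 e6 e7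
    rw [e1] at h
    rw [e2]
    rcases lt_trichotomy m' 0 with hm' | hm' | hm'
    · omega
    · rw [hm', ll_of_nonpos j' 0 le_rfl]
    · exfalso
      rcases j' with _ | jj
      · rw [d0, intGame_pos m' hm'] at h
        cases h with
        | zero G hL hR => exact hL.false PUnit.unit
      · have hodd : ¬ m' % 2 = 0 := e5.resolve_left (by omega)
        rw [dyadic_odd m' jj hodd] at h
        cases h with
        | zero G hL hR => exact hL.false PUnit.unit
  | succ n ih =>
    intro m j hm h
    obtain ⟨e1, e2, e3, e4, e5, e6, e7⟩ := nz_spec j m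
    rcases hnz : nz m j with ⟨m', j'⟩
    rw [hnz] at e1 e2 e3 e4 e5 e6 e7
    simp only at e1 e2 e3 e4 e5 e6 e7
    rw [e1] at h
    rw [e2]
    rcases lt_trichotomy m' 0 with hm' | hm' | hm'
    · omega
    · exfalso
      have hj' : j' = 0 := by
        rcases e5 with h5 | h5
        · exact h5
        · omega
      rw [hj', d0, hm', intGame_zero] at h
      cases h with
      | succ G i n h' => exact isLeftEnd_zero.false i
    · rcases j' with _ | jj
      · rw [d0, intGame_pos m' hm'] at h
        cases h with
        | succ G i n h' =>
          have := ih (m'-1) 0 (by omega) h'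
          rw [ll_zero] at this ⊢
          omega
      · have hodd : ¬ m' % 2 = 0 := e5.resolve_left (by omega)
        rw [dyadic_odd m' jj hodd] at h
        cases h with
        | succ G i n h' =>
          have := ih ((m'-1)/2) jj (by omega) h'
          rw [ll_odd_pos m' jj hodd hm']
          omega

lemma rightChain_negNatGame : ∀ k : ℕ, RightChain (-natGame k) k
  | 0 => by
      rw [show natGame 0 = 0 from rfl, neg_zero]
      exact RightChain.zero 0 isLeftEnd_zero isRightEnd_zero
  | k+1 => by
      rw [natGame_succ, neg_def]
      exact RightChain.succ (PGame.mk _ _ _ _) PUnit.unit k (rightChain_negNatGame k)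

lemma rightChain_rr : ∀ (j : ℕ) (m : ℤ), m ≤ 0 → RightChain (dyadicGame m j) (rr m j) := by
  intro j
  induction j with
  | zero =>
    intro m hm
    rw [d0, intGame_nonpos m hm, rr_zero]
    exact rightChain_negNatGame (-m).toNat
  | succ j ih =>
    intro m hm
    by_cases h : m % 2 = 0
    · rw [dyadic_even m j h, rr_even m j h]
      exact ih (m/2) (by omega)
    · have hm2 : m < 0 := by omega
      rw [dyadic_odd m j h, rr_odd_neg m j h hm2]
      exact RightChain.succ (PGame.mk _ _ _ _) PUnit.unit _ (ih ((m+1)/2) (by omega))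

lemma leftLength_eq (m : ℤ) (j : ℕ) (h : 0 < m) :
    leftLength (dyadicGame m j) = ll m j := by
  have h1 : LeftChain (dyadicGame m j) (ll m j) := leftChain_ll j m (le_of_lt h)
  exact leftChain_unique _ m j (le_of_lt h) (Nat.sInf_mem (⟨_, h1⟩ : Set.Nonempty _))

lemma rightLength_le (m : ℤ) (j : ℕ) (h : m < 0) :
    rightLength (dyadicGame m j) ≤ rr m j :=
  Nat.sInf_le (rightChain_rr j m (le_of_lt h))

lemma ctree_zero : CTree 0 0 0 0 := by
  have h := CTree.comp 0 0
  rw [d0, intGame_zero] at h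
  exact ctree_cast h rfl rfl rfl

lemma ctree_list (l : List (ℤ × ℕ)) :
    CTree ((l.map fun p => dyadicGame p.1 p.2).sum)
      ((l.map fun p => ll p.1 p.2).sum)
      ((l.map fun p => rr p.1 p.2).sum)
      ((l.map fun p => p.2 + p.1.natAbs).sum) := by
  induction l with
  | nil => simpa using ctree_zero
  | cons p l ih =>
    simp only [List.map_cons, List.sum_cons]
    exact CTree.add (CTree.comp p.1 p.2) ih

lemma sum_map_cast (l : List (ℤ × ℕ)) (f : ℤ × ℕ → ℕ) :
    (l.map fun p => (f p : ℤ)).sum = ((l.map f).sum : ℤ) := by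
  induction l with
  | nil => simp
  | cons p l ih => simp [ih]

end Stmt14



/-- if Σ l(aᵢ) − Σ r(bᵢ) < 0 then adding any dead-ending left end X
still gives a Left win. -/
theorem stmt14 (as bs : List (ℤ × ℕ))
    (ha : ∀ p ∈ as, 0 < p.1) (hb : ∀ p ∈ bs, p.1 < 0)
    (hk : (as.map fun p => (leftLength (dyadicGame p.1 p.2) : ℤ)).sum -
          (bs.map fun p => (rightLength (dyadicGame p.1 p.2) : ℤ)).sum < 0)
    (X : PGame) (hX : X ∈ E) (hXend : IsLeftEnd X) :
    outcome ((as.map fun p => dyadicGame p.1 p.2).sum +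
             (bs.map fun p => dyadicGame p.1 p.2).sum + X) = MOutcome.L := by
  classical
  have hXd : DeadLeftEnd X := (hX X Relation.ReflTransGen.refl).1 hXend
  have hT := Stmt14.CTree.add (Stmt14.ctree_list as) (Stmt14.ctree_list bs)
  have e_as : (as.map fun p => (leftLength (dyadicGame p.1 p.2) : ℤ)).sum
      = (((as.map fun p => Stmt14.ll p.1 p.2).sum : ℕ) : ℤ) := by
    rw [← Stmt14.sum_map_cast]
    apply congrArg List.sum
    apply List.map_congr_left
    intro p hp
    exact_mod_cast congrArg Nat.cast (Stmt14.leftLength_eq p.1 p.2 (ha p hp))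
  have e_bs : (bs.map fun p => (rightLength (dyadicGame p.1 p.2) : ℤ)).sum
      ≤ (((bs.map fun p => Stmt14.rr p.1 p.2).sum : ℕ) : ℤ) := by
    rw [← Stmt14.sum_map_cast]
    apply List.sum_le_sum
    intro p hp
    exact_mod_cast Stmt14.rightLength_le p.1 p.2 (hb p hp)
  have z1 : (bs.map fun p => Stmt14.ll p.1 p.2).sum = 0 := by
    apply List.sum_eq_zero
    intro x hx
    obtain ⟨p, hp, rfl⟩ := List.mem_map.1 hx
    exact Stmt14.ll_of_nonpos p.2 p.1 (le_of_lt (hb p hp))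
  have z2 : (as.map fun p => Stmt14.rr p.1 p.2).sum = 0 := by
    apply List.sum_eq_zero
    intro x hx
    obtain ⟨p, hp, rfl⟩ := List.mem_map.1 hx
    exact Stmt14.rr_of_nonneg p.2 p.1 (le_of_lt (ha p hp))
  have hlt : (as.map fun p => Stmt14.ll p.1 p.2).sum + (bs.map fun p => Stmt14.ll p.1 p.2).sum
      < (as.map fun p => Stmt14.rr p.1 p.2).sum + (bs.map fun p => Stmt14.rr p.1 p.2).sum := by
    omega
  have hmain := Stmt14.main X hXd _ _ _ _ _ hT le_rfl
  exact Stmt14.outcome_eq_L (hmain.1 (le_of_lt hlt)) (hmain.2 hlt)
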